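/- Let G be a topological group, Γ a subgroup of G, and L a normal subgroup of G. Write G⁰ for the identity component of G and L⁰ for the identity component of the topological group L (subspace topology), and set G ×_L G := {(a,b) ∈ G × G : ab⁻¹ ∈ L}, Γ ×_L Γ := {(γ₁,γ₂) ∈ Γ × Γ : γ₁γ₂⁻¹ ∈ L}, and G⁰ ×_{L⁰} G⁰ := {(a,b) ∈ G⁰ × G⁰ : ab⁻¹ ∈ L⁰}. If G = G⁰·Γ (every element of G is a product of an element of G⁰ and an element of Γ) and L·Γ = L⁰·Γ (as subsets of G), then G ×_L G = (G⁰ ×_{L⁰} G⁰)·(Γ ×_L Γ); in particular, the space of left cosets (G ×_L G) ⧸ (Γ ×_L Γ), with the quotient topology, is connected. (Lemma 2.11 of the paper; there G is a nilpotent Lie group, Γ uniform and discrete, L rational and closed, and the hypotheses correspond to connectedness of X = G/Γ and of the sub-nilmanifold π(L).) -/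

import Mathlib

/-- The relatively independent self-product `G ×_L G` of a group `G` over a normal
subgroup `L`, i.e. the subgroup `{(a₁, a₂) ∈ G × G : a₁ * a₂⁻¹ ∈ L}` of `G × G`. -/
def relProd {G : Type*} [Group G] (L : Subgroup G) [hN : L.Normal] : Subgroup (G × G) where
  carrier := {p : G × G | p.1 * p.2⁻¹ ∈ L}
  one_mem' := by simpa using L.one_mem
  mul_mem' := by
    rintro ⟨a₁, a₂⟩ ⟨b₁, b₂⟩ ha hb
    have h : (a₁ * b₁) * (a₂ * b₂)⁻¹ = (a₁ * (b₁ * b₂⁻¹) * a₁⁻¹) * (a₁ * a₂⁻¹) := by group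
    simp only [Set.mem_setOf_eq] at ha hb
    show a₁ * b₁ * (a₂ * b₂)⁻¹ ∈ L
    rw [h]
    exact mul_mem (hN.conj_mem _ hb a₁) ha
  inv_mem' := by
    rintro ⟨a₁, a₂⟩ ha
    simp only [Set.mem_setOf_eq] at ha
    have h : a₁⁻¹ * (a₂⁻¹)⁻¹ = a₁⁻¹ * (a₁ * a₂⁻¹)⁻¹ * (a₁⁻¹)⁻¹ := by group
    show a₁⁻¹ * (a₂⁻¹)⁻¹ ∈ L
    rw [h]
    exact hN.conj_mem _ (L.inv_mem ha) a₁⁻¹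

theorem mem_relProd {G : Type*} [Group G] {L : Subgroup G} [L.Normal] {p : G × G} :
    p ∈ relProd L ↔ p.1 * p.2⁻¹ ∈ L := Iff.rfl

open Pointwise

/-- **Lemma 2.11.** Let `G` be a topological group, `Γ` a subgroup, `L` a normal subgroup.
If `G = G⁰·Γ` and `L·Γ = L⁰·Γ`, then `G ×_L G = (G⁰ ×_{L⁰} G⁰)·(Γ ×_L Γ)`; in particular the
coset space `(G ×_L G) ⧸ (Γ ×_L Γ)` is connected. -/
theorem relProd_quotient_connected {G : Type*} [Group G] [TopologicalSpace G]
    [IsTopologicalGroup G] (Γ : Subgroup G) (L : Subgroup G) [L.Normal]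
    (hG : (Set.univ : Set G) = connectedComponent (1 : G) * (Γ : Set G))
    (hL : (L : Set G) * (Γ : Set G) =
      (Subtype.val '' connectedComponent (1 : L)) * (Γ : Set G)) :
    ((relProd L : Subgroup (G × G)) : Set (G × G)) =
      {p : G × G | p.1 ∈ connectedComponent (1 : G) ∧ p.2 ∈ connectedComponent (1 : G) ∧
        ∃ h : p.1 * p.2⁻¹ ∈ L, (⟨p.1 * p.2⁻¹, h⟩ : L) ∈ connectedComponent (1 : L)} *
      ((Γ.prod Γ ⊓ relProd L : Subgroup (G × G)) : Set (G × G)) ∧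
    ConnectedSpace (↥(relProd L) ⧸ ((Γ.prod Γ ⊓ relProd L).subgroupOf (relProd L))) := by
  have hN : L.Normal := inferInstance
  -- the inclusion L → G maps the identity component of L into that of G
  have hinc : ∀ {x : L}, x ∈ connectedComponent (1 : L) →
      (x : G) ∈ connectedComponent (1 : G) := by
    intro x hx
    have h := (continuous_subtype_val (p := fun g => g ∈ L)).image_connectedComponent_subset
      (1 : L)
    exact h ⟨x, hx, rfl⟩
  -- conjugation preserves the identity component of L
  have hconj : ∀ (g : G) (x : L), x ∈ connectedComponent (1 : L) →
      (⟨g * (x : G) * g⁻¹, hN.conj_mem _ x.2 g⟩ : L) ∈ connectedComponent (1 : L) := by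
    intro g x hx
    set c : L → L := fun y => ⟨g * (y : G) * g⁻¹, hN.conj_mem _ y.2 g⟩ with hc
    have hcont : Continuous c := by
      apply Continuous.subtype_mk
      exact (continuous_const.mul continuous_subtype_val).mul continuous_const
    have h1 : c 1 = 1 := by
      apply Subtype.ext
      simp [hc]
    have := hcont.image_connectedComponent_subset (1 : L)
    rw [h1] at this
    exact this ⟨x, hx, rfl⟩
  -- decomposition of G
  have hGdec : ∀ g : G, ∃ c ∈ connectedComponent (1 : G), ∃ γ ∈ Γ, g = c * γ := by
    intro g
    have hg : g ∈ (Set.univ : Set G) := trivial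
    rw [hG] at hg
    obtain ⟨c, hc, γ, hγ, h⟩ := hg
    exact ⟨c, hc, γ, hγ, h.symm⟩
  -- decomposition of L
  have hLdec : ∀ ℓ ∈ L, ∃ lam ∈ connectedComponent (1 : L), ∃ γ ∈ Γ, ℓ = (lam : G) * γ := by
    intro ℓ hℓ
    have h : ℓ ∈ (L : Set G) * (Γ : Set G) := ⟨ℓ, hℓ, 1, Γ.one_mem, mul_one ℓ⟩
    rw [hL] at h
    obtain ⟨x, ⟨lam, hlam, rfl⟩, γ, hγ, h⟩ := h
    exact ⟨lam, hlam, γ, hγ, h.symm⟩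
  have key : ((relProd L : Subgroup (G × G)) : Set (G × G)) =
      {p : G × G | p.1 ∈ connectedComponent (1 : G) ∧ p.2 ∈ connectedComponent (1 : G) ∧
        ∃ h : p.1 * p.2⁻¹ ∈ L, (⟨p.1 * p.2⁻¹, h⟩ : L) ∈ connectedComponent (1 : L)} *
      ((Γ.prod Γ ⊓ relProd L : Subgroup (G × G)) : Set (G × G)) := by
    apply Set.Subset.antisymm
    · rintro ⟨a, b⟩ hab
      have hℓ : a * b⁻¹ ∈ L := hab
      obtain ⟨b₀, hb₀, γ, hγ, hbeq⟩ := hGdec b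
      have hℓ' : b₀⁻¹ * (a * b⁻¹) * b₀ ∈ L := by
        have := hN.conj_mem _ hℓ b₀⁻¹
        simpa using this
      obtain ⟨lam, hlam, γ₀, hγ₀, heq⟩ := hLdec _ hℓ'
      have hγ₀L : γ₀ ∈ L := by
        have h : γ₀ = (lam : G)⁻¹ * (b₀⁻¹ * (a * b⁻¹) * b₀) := by rw [heq]; group
        rw [h]
        exact mul_mem (L.inv_mem lam.2) hℓ'
      refine ⟨(b₀ * (lam : G), b₀), ?_, (γ₀ * γ, γ), ?_, ?_⟩
      · refine ⟨mul_mem_connectedComponent_one hb₀ (hinc hlam), hb₀, ?_⟩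
        have hm : (b₀ * (lam : G)) * b₀⁻¹ ∈ L := hN.conj_mem _ lam.2 b₀
        refine ⟨hm, ?_⟩
        have := hconj b₀ lam hlam
        convert this using 2
      · refine ⟨⟨mul_mem hγ₀ hγ, hγ⟩, ?_⟩
        show (γ₀ * γ) * γ⁻¹ ∈ L
        simpa using hγ₀L
      · have h1 : b₀ * (lam : G) * (γ₀ * γ) = a := by
          calc b₀ * (lam : G) * (γ₀ * γ) = b₀ * ((lam : G) * γ₀) * γ := by group
            _ = b₀ * (b₀⁻¹ * (a * b⁻¹) * b₀) * γ := by rw [← heq]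
            _ = (a * b⁻¹) * (b₀ * γ) := by group
            _ = a := by rw [← hbeq]; group
        have h2 : b₀ * γ = b := hbeq.symm
        exact Prod.ext h1 h2
    · rintro p ⟨s, hs, t, ht, rfl⟩
      obtain ⟨-, -, h, -⟩ := hs
      have hsL : s ∈ relProd L := h
      have htL : t ∈ relProd L := (Subgroup.mem_inf.mp ht).2
      exact mul_mem hsL htL
  refine ⟨key, ?_⟩
  set H := (Γ.prod Γ ⊓ relProd L).subgroupOf (relProd L) with hH
  set F : L × G → (↥(relProd L) ⧸ H) := fun q =>
    QuotientGroup.mk ⟨((q.1 : G) * q.2, q.2), by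
      show ((q.1 : G) * q.2) * q.2⁻¹ ∈ L
      simpa using q.1.2⟩ with hF
  have hFcont : Continuous F := by
    apply Continuous.comp QuotientGroup.continuous_mk
    apply Continuous.subtype_mk
    exact ((continuous_subtype_val.comp continuous_fst).mul continuous_snd).prodMk
      continuous_snd
  have hC : IsConnected (connectedComponent (1 : L) ×ˢ connectedComponent (1 : G)) :=
    isConnected_connectedComponent.prod isConnected_connectedComponent
  have himg : F '' (connectedComponent (1 : L) ×ˢ connectedComponent (1 : G)) = Set.univ := by
    apply Set.eq_univ_of_forall
    intro q
    induction q using QuotientGroup.induction_on with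
    | H z =>
      have hz : (z : G × G) ∈ ((relProd L : Subgroup (G × G)) : Set (G × G)) := z.2
      rw [key] at hz
      obtain ⟨s, hs, t, ht, hst⟩ := hz
      obtain ⟨h1, h2, hmem, hcc⟩ := hs
      refine ⟨(⟨s.1 * s.2⁻¹, hmem⟩, s.2), ⟨hcc, h2⟩, ?_⟩
      have hsrel : ((s.1 * s.2⁻¹ * s.2, s.2) : G × G) ∈ relProd L := by
        show (s.1 * s.2⁻¹ * s.2) * s.2⁻¹ ∈ L
        have he : (s.1 * s.2⁻¹ * s.2) * s.2⁻¹ = s.1 * s.2⁻¹ := by group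
        rw [he]; exact hmem
      show QuotientGroup.mk (⟨(s.1 * s.2⁻¹ * s.2, s.2), hsrel⟩ : ↥(relProd L))
          = QuotientGroup.mk z
      rw [QuotientGroup.eq]
      rw [Subgroup.mem_subgroupOf]
      have hteq : ((⟨(s.1 * s.2⁻¹ * s.2, s.2), hsrel⟩ : ↥(relProd L))⁻¹ * z : G × G) = t := by
        show ((s.1 * s.2⁻¹ * s.2, s.2) : G × G)⁻¹ * (z : G × G) = t
        rw [← hst]
        have hs1 : s.1 * s.2⁻¹ * s.2 = s.1 := by group
        rw [hs1]
        show (s.1, s.2)⁻¹ * ((s.1, s.2) * t) = t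
        group
      rw [← hteq] at ht
      exact ht
  have huniv : IsConnected (Set.univ : Set (↥(relProd L) ⧸ H)) := by
    rw [← himg]
    exact hC.image F hFcont.continuousOn
  exact connectedSpace_iff_univ.mpr huniv
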